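/- For any permutations P, Q ∈ S4 (as 4×4 permutation matrices) and the toy Hadamard H-tilde, the operation (P·H-tilde) ⊗ (Q·H-tilde) maps the correlated state Σ_i o_i ⊗ o_i to a valid pure epistemic state (a {0,1}-vector in R^16 with exactly four 1's). -/

import Mathlib

open Kronecker

/-- The permutation matrix of `σ ∈ S₄`. -/
def permMat (σ : Equiv.Perm (Fin 4)) : Matrix (Fin 4) (Fin 4) ℝ :=
  fun i j => if i = σ j then 1 else 0

/-- The toy Hadamard `H`-tilde. -/
noncomputable def HTilde : Matrix (Fin 4) (Fin 4) ℝ :=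
  (1 / 2 : ℝ) • !![1, 1, 1, -1; 1, -1, 1, 1; 1, 1, -1, 1; -1, 1, 1, 1]

/-- The perfectly correlated two-toy-bit state `σ₀ = Σᵢ oᵢ ⊗ oᵢ`. -/
def corrState : Fin 4 × Fin 4 → ℝ := fun p => if p.1 = p.2 then 1 else 0

/-- `w` is a valid pure epistemic state of two toy bits: a `{0,1}`-vector in `ℝ¹⁶`
with exactly four entries equal to 1. -/
def IsPureTwoToyState (w : Fin 4 × Fin 4 → ℝ) : Prop :=
  (∀ p, w p = 0 ∨ w p = 1) ∧ (Finset.univ.filter (fun p => w p = 1)).card = 4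

lemma permMul (P : Equiv.Perm (Fin 4)) (i k : Fin 4) :
    (permMat P * HTilde) i k = HTilde (P.symm i) k := by
  simp only [Matrix.mul_apply, permMat]
  have : ∀ m : Fin 4, i = P m ↔ P.symm i = m := by
    intro m; exact eq_comm.trans ((Equiv.eq_symm_apply P).symm.trans eq_comm)
  simp only [this, ite_mul, one_mul, zero_mul]
  rw [Finset.sum_ite_eq Finset.univ (P.symm i) (fun m => HTilde m k)]
  simp

lemma hsum (a b : Fin 4) :
    ∑ k : Fin 4, HTilde a k * HTilde b k = if a = b then 1 else 0 := by
  fin_cases a <;> fin_cases b <;>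
    simp [HTilde, Fin.sum_univ_four, Matrix.smul_apply] <;> norm_num

lemma key (P Q : Equiv.Perm (Fin 4)) (i j : Fin 4) :
    ((permMat P * HTilde) ⊗ₖ (permMat Q * HTilde)).mulVec corrState (i, j)
      = if P.symm i = Q.symm j then 1 else 0 := by
  have : ((permMat P * HTilde) ⊗ₖ (permMat Q * HTilde)).mulVec corrState (i, j)
      = ∑ k : Fin 4, HTilde (P.symm i) k * HTilde (Q.symm j) k := by
    simp only [Matrix.mulVec, dotProduct, Fintype.sum_prod_type,
      Matrix.kroneckerMap_apply, corrState, permMul]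
    rw [Finset.sum_comm]
    simp [Finset.mul_sum, mul_ite]
  rw [this, hsum]

/-- For any permutations `P, Q ∈ S₄` the operation `(P·H̃) ⊗ (Q·H̃)` maps the
correlated state `Σᵢ oᵢ ⊗ oᵢ` to a valid pure epistemic state of two toy bits. -/
theorem stmt_14 (P Q : Equiv.Perm (Fin 4)) :
    IsPureTwoToyState (((permMat P * HTilde) ⊗ₖ (permMat Q * HTilde)).mulVec corrState) := by
  constructor
  · rintro ⟨i, j⟩
    rw [key]
    split_ifs <;> simp
  · have hset : (Finset.univ.filter (fun p : Fin 4 × Fin 4 =>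
        ((permMat P * HTilde) ⊗ₖ (permMat Q * HTilde)).mulVec corrState p = 1))
        = Finset.univ.image (fun i : Fin 4 => (i, Q (P.symm i))) := by
      ext ⟨i, j⟩
      simp only [Finset.mem_filter, Finset.mem_univ, true_and, Finset.mem_image, key]
      constructor
      · intro h
        split_ifs at h with hc
        · exact ⟨i, by simp [hc]⟩
        · norm_num at h
      · rintro ⟨a, ha⟩
        obtain ⟨rfl, rfl⟩ := Prod.mk.injEq .. ▸ ha
        simp
    rw [hset, Finset.card_image_of_injective _ (fun a b h => (Prod.mk.injEq .. ▸ h).1)]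
    simp
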